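/- Let X be the subsemilattice of {0,1,2}^ω (with coordinatewise minimum) consisting of all functions f : ω → {0,1,2} with nonempty finite support supp(f) = f⁻¹({0,1}). For n ∈ ω let 𝟎_n, 𝟏_n ∈ X be defined by 𝟎_n(n) = 0, 𝟏_n(n) = 1 and 𝟎_n(i) = 𝟏_n(i) = 2 for i ≠ n. Then X admits a metrizable shift-continuous topology τ such that the set {(𝟎_n, 𝟏_n) : n ∈ ℕ} is dense in X × X; consequently the partial order P = {(x,y) : xy = x} of the semitopological semilattice (X, τ) is dense and non-closed in X × X. -/

import Mathlib

/-- Elements of `{0,1,2}^ω` with finite nonempty support `f⁻¹({0,1}) = {i | f i ≠ 2}`. -/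
def SL : Type :=
  {f : ℕ → Fin 3 // {i : ℕ | f i ≠ 2}.Finite ∧ {i : ℕ | f i ≠ 2}.Nonempty}

private lemma min_eq_two_iff : ∀ x y : Fin 3, min x y = 2 ↔ x = 2 ∧ y = 2 := by decide

/-- Coordinatewise minimum on `SL`. -/
def SLmul (f g : SL) : SL :=
  ⟨fun i => min (f.1 i) (g.1 i), by
    constructor
    · apply (f.2.1.union g.2.1).subset
      intro i hi
      simp only [Set.mem_setOf_eq, Set.mem_union] at hi ⊢
      by_contra h
      push_neg at h
      exact hi ((min_eq_two_iff _ _).2 ⟨h.1, h.2⟩)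
    · obtain ⟨i, hi⟩ := f.2.2
      exact ⟨i, fun h => hi ((min_eq_two_iff _ _).1 h).1⟩⟩

/-- The element `𝟎_n` taking value `0` at `n` and `2` elsewhere. -/
def zeroEl (n : ℕ) : SL :=
  ⟨fun i => if i = n then 0 else 2, by
    have h : {i : ℕ | (if i = n then (0 : Fin 3) else 2) ≠ 2} = {n} := by
      ext i
      by_cases hi : i = n <;> simp [hi]
    constructor
    · rw [h]; exact Set.finite_singleton n
    · rw [h]; exact ⟨n, rfl⟩⟩

/-- The element `𝟏_n` taking value `1` at `n` and `2` elsewhere. -/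
def oneEl (n : ℕ) : SL :=
  ⟨fun i => if i = n then 1 else 2, by
    have h : {i : ℕ | (if i = n then (1 : Fin 3) else 2) ≠ 2} = {n} := by
      ext i
      by_cases hi : i = n <;> simp [hi]
    constructor
    · rw [h]; exact Set.finite_singleton n
    · rw [h]; exact ⟨n, rfl⟩⟩

/- ===================  auxiliary development  =================== -/

open Classical

namespace SL16

/-- The maximum of the support. -/
noncomputable def mx (f : SL) : ℕ :=
  f.2.1.toFinset.max' ((Set.Finite.toFinset_nonempty _).2 f.2.2)

lemma le_mx {f : SL} {i : ℕ} (h : f.1 i ≠ 2) : i ≤ mx f :=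
  Finset.le_max' _ _ (f.2.1.mem_toFinset.2 h)

lemma mx_spec (f : SL) : f.1 (mx f) ≠ 2 :=
  f.2.1.mem_toFinset.1 (Finset.max'_mem _ _)

lemma eq_two_of_mx_lt {f : SL} {i : ℕ} (h : mx f < i) : f.1 i = 2 := by
  by_contra h2
  exact absurd (le_mx h2) (not_le.2 h)

lemma mx_lt_of {f : SL} {n : ℕ} (h : ∀ i, f.1 i ≠ 2 → i < n) : mx f < n :=
  h _ (mx_spec f)

lemma mx_eq_of {f : SL} {n : ℕ} (h1 : f.1 n ≠ 2) (h2 : ∀ i, f.1 i ≠ 2 → i ≤ n) :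
    mx f = n :=
  le_antisymm (h2 _ (mx_spec f)) (le_mx h1)

lemma fin3_le_two : ∀ x : Fin 3, x ≤ 2 := by decide

lemma mx_zeroEl (n : ℕ) : mx (zeroEl n) = n := by
  apply mx_eq_of
  · show (if n = n then (0 : Fin 3) else 2) ≠ 2
    simp
  · intro i hi
    by_cases h : i = n
    · omega
    · exfalso
      apply hi
      show (if i = n then (0 : Fin 3) else 2) = 2
      simp [h]

lemma mx_oneEl (n : ℕ) : mx (oneEl n) = n := by
  apply mx_eq_of
  · show (if n = n then (1 : Fin 3) else 2) ≠ 2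
    simp
  · intro i hi
    by_cases h : i = n
    · omega
    · exfalso
      apply hi
      show (if i = n then (1 : Fin 3) else 2) = 2
      simp [h]

lemma SLmul_apply (f g : SL) (i : ℕ) : (SLmul f g).1 i = min (f.1 i) (g.1 i) := rfl

lemma mx_mul (f g : SL) : mx (SLmul f g) = max (mx f) (mx g) := by
  apply mx_eq_of
  · rw [SLmul_apply]
    rcases le_total (mx f) (mx g) with h | h
    · rw [max_eq_right h]
      intro hc
      exact mx_spec g ((min_eq_two_iff _ _).1 hc).2
    · rw [max_eq_left h]
      intro hc
      exact mx_spec f ((min_eq_two_iff _ _).1 hc).1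
  · intro i hi
    rw [SLmul_apply] at hi
    rcases (not_and_or.1 (fun hc => hi ((min_eq_two_iff _ _).2 hc))) with h | h
    · exact le_trans (le_mx h) (le_max_left _ _)
    · exact le_trans (le_mx h) (le_max_right _ _)

/- ============ encoding ============ -/

/-- Decode a natural number into a function `ℕ → Fin 3` with cofinitely many `2`s. -/
noncomputable def dec (a : ℕ) : ℕ → Fin 3 :=
  fun i => ⟨min ((Denumerable.ofNat (List ℕ) a).getD i 2) 2,
    Nat.lt_succ_of_le (min_le_right _ _)⟩

lemma dec_eq_two {a i : ℕ} (h : (Denumerable.ofNat (List ℕ) a).length ≤ i) :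
    dec a i = 2 := by
  apply Fin.ext
  show min ((Denumerable.ofNat (List ℕ) a).getD i 2) 2 = ((2 : Fin 3) : ℕ)
  rw [List.getD_eq_default _ _ h]
  rfl

lemma dec_finite (a : ℕ) : {i : ℕ | dec a i ≠ 2}.Finite := by
  apply Set.Finite.subset (Set.finite_Iio ((Denumerable.ofNat (List ℕ) a).length))
  intro i hi
  simp only [Set.mem_setOf_eq] at hi
  simp only [Set.mem_Iio]
  by_contra h
  exact hi (dec_eq_two (not_lt.1 h))

lemma dec_surj (f : SL) : ∃ a : ℕ, dec a = f.1 := by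
  refine ⟨Encodable.encode ((List.range (mx f + 1)).map fun i => ((f.1 i : Fin 3) : ℕ)), ?_⟩
  funext i
  apply Fin.ext
  show min ((Denumerable.ofNat (List ℕ)
      (Encodable.encode ((List.range (mx f + 1)).map fun i => ((f.1 i : Fin 3) : ℕ)))).getD i 2) 2
    = ((f.1 i : Fin 3) : ℕ)
  rw [Denumerable.ofNat_encode]
  by_cases h : i < mx f + 1
  · have hlen : i < ((List.range (mx f + 1)).map fun i => ((f.1 i : Fin 3) : ℕ)).length := by
      simpa using h
    rw [List.getD_eq_getElem _ _ hlen]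
    simp only [List.getElem_map, List.getElem_range]
    exact min_eq_left (Nat.lt_succ_iff.1 (f.1 i).2)
  · have hlen : ((List.range (mx f + 1)).map fun i => ((f.1 i : Fin 3) : ℕ)).length ≤ i := by
      simpa using not_lt.1 h
    rw [List.getD_eq_default _ _ hlen]
    have h2 : f.1 i = 2 := eq_two_of_mx_lt (by omega)
    rw [h2]
    rfl

/-- The enumeration of pairs. -/
noncomputable def en (n : ℕ) : SL × SL :=
  if h : (∃ i, dec n.unpair.1 i ≠ 2) ∧ (∀ i, dec n.unpair.1 i ≠ 2 → i < n) ∧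
      (∃ i, dec n.unpair.2.unpair.1 i ≠ 2) ∧ (∀ i, dec n.unpair.2.unpair.1 i ≠ 2 → i < n) then
    (⟨dec n.unpair.1, dec_finite _, h.1⟩, ⟨dec n.unpair.2.unpair.1, dec_finite _, h.2.2.1⟩)
  else (zeroEl 0, zeroEl 0)

lemma en_lt (n : ℕ) (hn : 1 ≤ n) : mx (en n).1 < n ∧ mx (en n).2 < n := by
  unfold en
  split_ifs with h
  · exact ⟨mx_lt_of h.2.1, mx_lt_of h.2.2.2⟩
  · simp only [mx_zeroEl]
    omega

lemma en_surj (x y : SL) (N : ℕ) : ∃ n : ℕ, N < n ∧ en n = (x, y) := by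
  obtain ⟨a, ha⟩ := dec_surj x
  obtain ⟨b, hb⟩ := dec_surj y
  set k := N + mx x + mx y + 1 with hk
  refine ⟨Nat.pair a (Nat.pair b k), ?_, ?_⟩
  · have h1 : k ≤ Nat.pair b k := Nat.right_le_pair _ _
    have h2 : Nat.pair b k ≤ Nat.pair a (Nat.pair b k) := Nat.right_le_pair _ _
    omega
  · have hkn : k ≤ Nat.pair a (Nat.pair b k) :=
      le_trans (Nat.right_le_pair _ _) (Nat.right_le_pair _ _)
    have hu1 : (Nat.pair a (Nat.pair b k)).unpair.1 = a := by rw [Nat.unpair_pair]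
    have hu2 : (Nat.pair a (Nat.pair b k)).unpair.2.unpair.1 = b := by
      rw [Nat.unpair_pair]; simp [Nat.unpair_pair]
    unfold en
    rw [dif_pos]
    · apply Prod.ext
      · apply Subtype.ext
        show dec (Nat.pair a (Nat.pair b k)).unpair.1 = x.1
        rw [hu1, ha]
      · apply Subtype.ext
        show dec (Nat.pair a (Nat.pair b k)).unpair.2.unpair.1 = y.1
        rw [hu2, hb]
    · rw [hu1, hu2, ha, hb]
      refine ⟨x.2.2, fun i hi => ?_, y.2.2, fun i hi => ?_⟩
      · have := le_mx hi
        omega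
      · have := le_mx hi
        omega

/- ============ the parent map ============ -/

/-- The "target" of an element: selected from the enumerated pair by the top value. -/
noncomputable def tsel (z : SL) : SL :=
  if z.1 (mx z) = 0 then (en (mx z)).1 else (en (mx z)).2

lemma mx_tsel {z : SL} (h : mx z ≠ 0) : mx (tsel z) < mx z := by
  unfold tsel
  split_ifs
  · exact (en_lt _ (by omega)).1
  · exact (en_lt _ (by omega)).2

/-- The parent map of the tree. -/
noncomputable def lam (z : SL) : SL :=
  if h : mx z = 0 then zeroEl 0
  else
    ⟨fun i => if i = mx z then 2 else min (z.1 i) ((tsel z).1 i), by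
      constructor
      · apply Set.Finite.subset (z.2.1.union (tsel z).2.1)
        intro i hi
        simp only [Set.mem_setOf_eq] at hi
        by_cases hiz : i = mx z
        · simp [hiz] at hi
        · simp only [if_neg hiz] at hi
          simp only [Set.mem_union, Set.mem_setOf_eq]
          by_contra hc
          push_neg at hc
          exact hi ((min_eq_two_iff _ _).2 hc)
      · refine ⟨mx (tsel z), ?_⟩
        have hne : mx (tsel z) ≠ mx z := by
          have := mx_tsel h
          omega
        simp only [Set.mem_setOf_eq, if_neg hne]
        intro hc
        exact mx_spec (tsel z) ((min_eq_two_iff _ _).1 hc).2⟩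

lemma lam_apply {z : SL} (h : mx z ≠ 0) :
    (lam z).1 = fun i => if i = mx z then 2 else min (z.1 i) ((tsel z).1 i) := by
  exact congrArg Subtype.val (show lam z = _ from dif_neg h)

lemma lam_apply' {z : SL} (h : mx z ≠ 0) (i : ℕ) :
    (lam z).1 i = if i = mx z then 2 else min (z.1 i) ((tsel z).1 i) := by
  rw [lam_apply h]

lemma lam_of_mx_eq_zero {z : SL} (h : mx z = 0) : lam z = zeroEl 0 := by
  unfold lam; exact dif_pos h

lemma mx_lam_lt {z : SL} (h : mx z ≠ 0) : mx (lam z) < mx z := by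
  apply mx_lt_of
  intro i hi
  rw [lam_apply h] at hi
  simp only at hi
  by_cases hiz : i = mx z
  · simp [hiz] at hi
  · rw [if_neg hiz] at hi
    rcases not_and_or.1 (fun hc => hi ((min_eq_two_iff _ _).2 hc)) with h2 | h2
    · have := le_mx h2
      omega
    · have := le_mx h2
      have := mx_tsel h
      omega

lemma mx_lam_le (z : SL) : mx (lam z) ≤ mx z := by
  by_cases h : mx z = 0
  · rw [lam_of_mx_eq_zero h, mx_zeroEl]
    omega
  · exact (mx_lam_lt h).le

lemma tsel_mul {b z : SL} (h : mx b < mx z) : tsel (SLmul b z) = tsel z := by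
  have hmx : mx (SLmul b z) = mx z := by
    rw [mx_mul]
    exact max_eq_right h.le
  have hval : (SLmul b z).1 (mx z) = z.1 (mx z) := by
    rw [SLmul_apply, eq_two_of_mx_lt h]
    exact min_eq_right (fin3_le_two _)
  unfold tsel
  rw [hmx, hval]

lemma lam_mul {b z : SL} (h : mx b < mx z) : lam (SLmul b z) = SLmul b (lam z) := by
  have hz0 : mx z ≠ 0 := by omega
  have hmx : mx (SLmul b z) = mx z := by
    rw [mx_mul]; exact max_eq_right h.le
  have hbz0 : mx (SLmul b z) ≠ 0 := by omega
  apply Subtype.ext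
  funext i
  show (lam (SLmul b z)).1 i = (SLmul b (lam z)).1 i
  rw [SLmul_apply, lam_apply' hbz0, lam_apply' hz0, tsel_mul h, hmx]
  by_cases hiz : i = mx z
  · rw [if_pos hiz, if_pos hiz, hiz, eq_two_of_mx_lt h]
    rfl
  · rw [if_neg hiz, if_neg hiz, SLmul_apply, min_assoc]

lemma lam_zeroEl {n : ℕ} (hn : 1 ≤ n) : lam (zeroEl n) = (en n).1 := by
  have h0 : mx (zeroEl n) ≠ 0 := by rw [mx_zeroEl]; omega
  have hval : (zeroEl n).1 (mx (zeroEl n)) = 0 := by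
    rw [mx_zeroEl]
    show (if n = n then (0 : Fin 3) else 2) = 0
    simp
  have hts : tsel (zeroEl n) = (en n).1 := by
    unfold tsel
    rw [hval, if_pos rfl, mx_zeroEl]
  apply Subtype.ext
  rw [lam_apply h0, hts, mx_zeroEl]
  funext i
  by_cases hiz : i = n
  · rw [if_pos hiz, hiz]
    exact (eq_two_of_mx_lt (en_lt n hn).1).symm
  · rw [if_neg hiz]
    show min (if i = n then (0 : Fin 3) else 2) _ = _
    rw [if_neg hiz]
    exact min_eq_right (fin3_le_two _)

lemma lam_oneEl {n : ℕ} (hn : 1 ≤ n) : lam (oneEl n) = (en n).2 := by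
  have h0 : mx (oneEl n) ≠ 0 := by rw [mx_oneEl]; omega
  have hval : (oneEl n).1 (mx (oneEl n)) = 1 := by
    rw [mx_oneEl]
    show (if n = n then (1 : Fin 3) else 2) = 1
    simp
  have hts : tsel (oneEl n) = (en n).2 := by
    unfold tsel
    rw [hval, mx_oneEl, if_neg (by decide)]
  apply Subtype.ext
  rw [lam_apply h0, hts, mx_oneEl]
  funext i
  by_cases hiz : i = n
  · rw [if_pos hiz, hiz]
    exact (eq_two_of_mx_lt (en_lt n hn).2).symm
  · rw [if_neg hiz]
    show min (if i = n then (1 : Fin 3) else 2) _ = _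
    rw [if_neg hiz]
    exact min_eq_right (fin3_le_two _)

/- ============ the ancestor chain ============ -/

lemma lam_fix : lam (zeroEl 0) = zeroEl 0 :=
  lam_of_mx_eq_zero (mx_zeroEl 0)

lemma iter_fix (k : ℕ) : lam^[k] (zeroEl 0) = zeroEl 0 := by
  induction k with
  | zero => rfl
  | succ k ih => rw [Function.iterate_succ_apply, lam_fix, ih]

lemma stab : ∀ (k : ℕ) (z : SL), mx z + 1 ≤ k → lam^[k] z = zeroEl 0 := by
  intro k
  induction k with
  | zero => intro z hz; omega
  | succ k ih =>
    intro z hz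
    rw [Function.iterate_succ_apply]
    by_cases h : mx z = 0
    · rw [lam_of_mx_eq_zero h]
      exact iter_fix k
    · exact ih (lam z) (by have := mx_lam_lt h; omega)

noncomputable instance : DecidableEq SL := Classical.decEq _

/-- The finite set of ancestors (iterates of the parent map). -/
noncomputable def ch (z : SL) : Finset SL :=
  (Finset.range (mx z + 2)).image (fun k => lam^[k] z)

lemma mem_ch_iter (z : SL) (k : ℕ) : lam^[k] z ∈ ch z := by
  by_cases h : k < mx z + 2
  · exact Finset.mem_image.2 ⟨k, Finset.mem_range.2 h, rfl⟩
  · rw [stab k z (by omega)]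
    rw [← stab (mx z + 1) z (le_refl _)]
    exact Finset.mem_image.2 ⟨mx z + 1, Finset.mem_range.2 (by omega), rfl⟩

lemma mem_ch_iff {w z : SL} : w ∈ ch z ↔ ∃ k, lam^[k] z = w := by
  constructor
  · intro h
    obtain ⟨k, _, hk⟩ := Finset.mem_image.1 h
    exact ⟨k, hk⟩
  · rintro ⟨k, rfl⟩
    exact mem_ch_iter z k

lemma self_mem_ch (z : SL) : z ∈ ch z :=
  mem_ch_iff.2 ⟨0, rfl⟩

lemma ch_trans {w z : SL} (h : w ∈ ch z) : ch w ⊆ ch z := by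
  obtain ⟨k, hk⟩ := mem_ch_iff.1 h
  intro x hx
  obtain ⟨j, hj⟩ := mem_ch_iff.1 hx
  refine mem_ch_iff.2 ⟨j + k, ?_⟩
  rw [Function.iterate_add_apply, hk, hj]

lemma mx_iter_le (z : SL) (k : ℕ) : mx (lam^[k] z) ≤ mx z := by
  induction k with
  | zero => exact le_refl _
  | succ k ih =>
    rw [Function.iterate_succ_apply']
    exact le_trans (mx_lam_le _) ih

lemma mx_ch_le {w z : SL} (h : w ∈ ch z) : mx w ≤ mx z := by
  obtain ⟨k, hk⟩ := mem_ch_iff.1 h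
  rw [← hk]
  exact mx_iter_le z k

lemma periodic_eq_root {u : SL} {c : ℕ} (hc : 1 ≤ c) (h : lam^[c] u = u) :
    u = zeroEl 0 := by
  have hiter : ∀ N : ℕ, lam^[c * N] u = u := by
    intro N
    induction N with
    | zero => rfl
    | succ N ih =>
      rw [Nat.mul_succ, Function.iterate_add_apply, h, ih]
  have hN : mx u + 1 ≤ c * (mx u + 1) := Nat.le_mul_of_pos_left _ hc
  rw [← hiter (mx u + 1)]
  exact stab _ _ hN

lemma ch_antisymm {u v : SL} (h1 : u ∈ ch v) (h2 : v ∈ ch u) : u = v := by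
  obtain ⟨k, hk⟩ := mem_ch_iff.1 h1
  obtain ⟨j, hj⟩ := mem_ch_iff.1 h2
  rcases Nat.eq_zero_or_pos k with hk0 | hk0
  · rw [hk0] at hk
    exact hk.symm
  · have hu : lam^[k + j] u = u := by
      rw [Function.iterate_add_apply, hj, hk]
    have hv : lam^[j + k] v = v := by
      rw [Function.iterate_add_apply, hk, hj]
    rw [periodic_eq_root (by omega) hu, periodic_eq_root (by omega) hv]

lemma ch_insert (z : SL) : ch z = insert z (ch (lam z)) := by
  ext w
  rw [Finset.mem_insert, mem_ch_iff, mem_ch_iff]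
  constructor
  · rintro ⟨k, rfl⟩
    cases k with
    | zero => exact Or.inl rfl
    | succ k =>
      right
      exact ⟨k, by rw [← Function.iterate_succ_apply]⟩
  · rintro (rfl | ⟨k, rfl⟩)
    · exact ⟨0, rfl⟩
    · exact ⟨k + 1, by rw [Function.iterate_succ_apply]⟩

/- ============ descent index ============ -/

lemma exists_descent (u b : SL) : ∃ k, mx (lam^[k] u) ≤ mx b :=
  ⟨mx u + 1, by rw [stab _ _ (le_refl _), mx_zeroEl]; omega⟩

/-- The first index where the chain of `u` drops to level `≤ mx b`. -/
noncomputable def dk (u b : SL) : ℕ := Nat.find (exists_descent u b)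

lemma dk_spec (u b : SL) : mx (lam^[dk u b] u) ≤ mx b :=
  Nat.find_spec (exists_descent u b)

lemma dk_min {u b : SL} {j : ℕ} (h : j < dk u b) : ¬ mx (lam^[j] u) ≤ mx b :=
  Nat.find_min (exists_descent u b) h

lemma dk_lam {u b : SL} (h : 1 ≤ dk u b) : dk (lam u) b = dk u b - 1 := by
  show Nat.find (exists_descent (lam u) b) = dk u b - 1
  rw [Nat.find_eq_iff]
  constructor
  · have := dk_spec u b
    rwa [show dk u b = (dk u b - 1) + 1 by omega, Function.iterate_succ_apply] at this
  · intro j hj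
    have := dk_min (show j + 1 < dk u b by omega)
    rwa [Function.iterate_succ_apply] at this

/-- Decomposition of the chain of a translate. -/
lemma ch_mul_decomp (b : SL) : ∀ (c : ℕ) (u : SL), dk u b = c →
    ch (SLmul b u) =
      ((ch u).filter (fun z => mx b < mx z)).image (SLmul b) ∪
        ch (SLmul b (lam^[dk u b] u)) := by
  intro c
  induction c with
  | zero =>
    intro u hc
    have hmxu : mx u ≤ mx b := by
      have := dk_spec u b
      rwa [hc] at this
    have hfe : (ch u).filter (fun z => mx b < mx z) = ∅ := by
      apply Finset.filter_false_of_mem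
      intro z hz
      have := mx_ch_le hz
      omega
    rw [hfe, Finset.image_empty, Finset.empty_union, hc]
    rfl
  | succ c ih =>
    intro u hc
    have hmxu : mx b < mx u := by
      have := dk_min (show 0 < dk u b by omega)
      simpa using this
    have hdk : dk (lam u) b = c := by
      rw [dk_lam (by omega), hc]
      omega
    have key : ch (SLmul b u) = insert (SLmul b u) (ch (SLmul b (lam u))) := by
      rw [ch_insert (SLmul b u), lam_mul hmxu]
    rw [key, ih (lam u) hdk, hdk]
    have hiter : lam^[c] (lam u) = lam^[dk u b] u := by
      rw [← Function.iterate_succ_apply, hc]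
    rw [hiter]
    rw [← Finset.insert_union]
    congr 1
    rw [ch_insert u, Finset.filter_insert, if_pos hmxu, Finset.image_insert]

/- ============ the metric ============ -/

open scoped NNReal

/-- Weight of a point. -/
noncomputable def wt (z : SL) : ℝ≥0 := 2⁻¹ ^ (mx z)

lemma wt_pos (z : SL) : 0 < wt z := pow_pos (by norm_num) _

/-- The distance. -/
noncomputable def DD (u v : SL) : ℝ≥0 := (symmDiff (ch u) (ch v)).sup wt

lemma DD_self (u : SL) : DD u u = 0 := by
  unfold DD
  rw [symmDiff_self]
  rfl

lemma DD_comm (u v : SL) : DD u v = DD v u := by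
  unfold DD
  rw [symmDiff_comm]

lemma DD_triangle (u v w : SL) : DD u w ≤ DD u v + DD v w := by
  apply Finset.sup_le
  intro x hx
  rcases Finset.mem_symmDiff.1 hx with ⟨h1, h2⟩ | ⟨h1, h2⟩
  · by_cases hv : x ∈ ch v
    · exact le_trans (Finset.le_sup (Finset.mem_symmDiff.2 (Or.inl ⟨hv, h2⟩))) le_add_self
    · exact le_trans (Finset.le_sup (Finset.mem_symmDiff.2 (Or.inl ⟨h1, hv⟩))) le_self_add
  · by_cases hv : x ∈ ch v
    · exact le_trans (Finset.le_sup (Finset.mem_symmDiff.2 (Or.inr ⟨hv, h2⟩))) le_self_add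
    · exact le_trans (Finset.le_sup (Finset.mem_symmDiff.2 (Or.inr ⟨h1, hv⟩))) le_add_self

lemma eq_of_DD_eq_zero {u v : SL} (h : DD u v = 0) : u = v := by
  by_contra hne
  have hx : ∃ x, x ∈ symmDiff (ch u) (ch v) := by
    by_cases hu : u ∈ ch v
    · by_cases hv : v ∈ ch u
      · exact absurd (ch_antisymm hu hv) hne
      · exact ⟨v, Finset.mem_symmDiff.2 (Or.inr ⟨self_mem_ch v, hv⟩)⟩
    · exact ⟨u, Finset.mem_symmDiff.2 (Or.inl ⟨self_mem_ch u, hu⟩)⟩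
  obtain ⟨x, hx⟩ := hx
  have h1 : wt x ≤ DD u v := Finset.le_sup hx
  rw [h] at h1
  exact absurd (le_antisymm h1 (wt_pos x).le) (wt_pos x).ne'

/-- The metric space structure. -/
noncomputable def SLms : MetricSpace SL where
  dist u v := ((DD u v : ℝ≥0) : ℝ)
  dist_self u := by
    show ((DD u u : ℝ≥0) : ℝ) = 0
    rw [DD_self]; exact NNReal.coe_zero
  dist_comm u v := by
    show ((DD u v : ℝ≥0) : ℝ) = ((DD v u : ℝ≥0) : ℝ)
    rw [DD_comm]
  dist_triangle u v w := by
    show ((DD u w : ℝ≥0) : ℝ) ≤ ((DD u v : ℝ≥0) : ℝ) + ((DD v w : ℝ≥0) : ℝ)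
    exact_mod_cast DD_triangle u v w
  eq_of_dist_eq_zero := by
    intro u v h
    have h' : ((DD u v : ℝ≥0) : ℝ) = 0 := h
    exact eq_of_DD_eq_zero (by exact_mod_cast h')

/- ============ the contraction property ============ -/

lemma descend_mem {u v b : SL} (H : ∀ z ∈ symmDiff (ch u) (ch v), mx b < mx z) :
    lam^[dk u b] u ∈ ch (lam^[dk v b] v) := by
  have hu0v : lam^[dk u b] u ∈ ch v := by
    by_contra hc
    have hmem : lam^[dk u b] u ∈ symmDiff (ch u) (ch v) :=
      Finset.mem_symmDiff.2 (Or.inl ⟨mem_ch_iter _ _, hc⟩)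
    have := H _ hmem
    have := dk_spec u b
    omega
  obtain ⟨k, hk⟩ := mem_ch_iff.1 hu0v
  have hkge : dk v b ≤ k := by
    by_contra hlt
    apply dk_min (not_le.1 hlt)
    rw [hk]
    exact dk_spec u b
  refine mem_ch_iff.2 ⟨k - dk v b, ?_⟩
  rw [← Function.iterate_add_apply, show k - dk v b + dk v b = k by omega, hk]

lemma descend_eq {u v b : SL} (H : ∀ z ∈ symmDiff (ch u) (ch v), mx b < mx z) :
    lam^[dk u b] u = lam^[dk v b] v := by
  have H' : ∀ z ∈ symmDiff (ch v) (ch u), mx b < mx z := by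
    intro z hz
    rw [symmDiff_comm] at hz
    exact H z hz
  exact ch_antisymm (descend_mem H) (descend_mem H')

lemma core {b u v : SL} (H : ∀ z ∈ symmDiff (ch u) (ch v), mx b < mx z) :
    DD (SLmul b u) (SLmul b v) ≤ DD u v := by
  apply Finset.sup_le
  intro x hx
  rw [ch_mul_decomp b (dk u b) u rfl, ch_mul_decomp b (dk v b) v rfl, descend_eq H] at hx
  have key : ∃ z, z ∈ symmDiff (ch u) (ch v) ∧ mx b < mx z ∧ x = SLmul b z := by
    rcases Finset.mem_symmDiff.1 hx with ⟨h1, h2⟩ | ⟨h1, h2⟩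
    · have hxT : x ∉ ch (SLmul b (lam^[dk v b] v)) := fun hc => h2 (Finset.mem_union_right _ hc)
      have hxim := (Finset.mem_union.1 h1).resolve_right hxT
      obtain ⟨z, hz, hzx⟩ := Finset.mem_image.1 hxim
      obtain ⟨hzu, hzb⟩ := Finset.mem_filter.1 hz
      have hznv : z ∉ ch v := by
        intro hc
        exact h2 (Finset.mem_union_left _
          (Finset.mem_image.2 ⟨z, Finset.mem_filter.2 ⟨hc, hzb⟩, hzx⟩))
      exact ⟨z, Finset.mem_symmDiff.2 (Or.inl ⟨hzu, hznv⟩), hzb, hzx.symm⟩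
    · have hxT : x ∉ ch (SLmul b (lam^[dk v b] v)) := fun hc => h2 (Finset.mem_union_right _ hc)
      have hxim := (Finset.mem_union.1 h1).resolve_right hxT
      obtain ⟨z, hz, hzx⟩ := Finset.mem_image.1 hxim
      obtain ⟨hzv, hzb⟩ := Finset.mem_filter.1 hz
      have hznu : z ∉ ch u := by
        intro hc
        exact h2 (Finset.mem_union_left _
          (Finset.mem_image.2 ⟨z, Finset.mem_filter.2 ⟨hc, hzb⟩, hzx⟩))
      exact ⟨z, Finset.mem_symmDiff.2 (Or.inr ⟨hzv, hznu⟩), hzb, hzx.symm⟩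
  obtain ⟨z, hzmem, hzb, rfl⟩ := key
  have hwt : wt (SLmul b z) = wt z := by
    unfold wt
    rw [mx_mul, max_eq_right hzb.le]
  rw [hwt]
  exact Finset.le_sup hzmem

lemma core' {b u v : SL} (h : DD u v < 2⁻¹ ^ (mx b)) :
    DD (SLmul b u) (SLmul b v) ≤ DD u v := by
  apply core
  intro z hz
  by_contra hc
  have h1 : (2⁻¹ : ℝ≥0) ^ (mx b) ≤ 2⁻¹ ^ (mx z) :=
    pow_le_pow_of_le_one zero_le (by norm_num) (not_lt.1 hc)
  have h2 : wt z ≤ DD u v := Finset.le_sup hz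
  unfold wt at h2
  have := lt_of_le_of_lt (le_trans h1 h2) h
  exact absurd this (lt_irrefl _)

/- ============ density estimates ============ -/

lemma symmDiff_insert_le {w : SL} {s : Finset SL} :
    (symmDiff (insert w s) s).sup wt ≤ wt w := by
  apply Finset.sup_le
  intro x hx
  rcases Finset.mem_symmDiff.1 hx with ⟨h1, h2⟩ | ⟨h1, h2⟩
  · rcases Finset.mem_insert.1 h1 with rfl | hxs
    · exact le_refl _
    · exact absurd hxs h2
  · exact absurd (Finset.mem_insert_of_mem h1) h2

lemma DD_zeroEl_le {n : ℕ} (hn : 1 ≤ n) : DD (zeroEl n) (en n).1 ≤ 2⁻¹ ^ n := by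
  have h : ch (zeroEl n) = insert (zeroEl n) (ch (en n).1) := by
    rw [ch_insert, lam_zeroEl hn]
  unfold DD
  rw [h]
  have := @symmDiff_insert_le (zeroEl n) (ch (en n).1)
  unfold wt at this
  rwa [mx_zeroEl] at this

lemma DD_oneEl_le {n : ℕ} (hn : 1 ≤ n) : DD (oneEl n) (en n).2 ≤ 2⁻¹ ^ n := by
  have h : ch (oneEl n) = insert (oneEl n) (ch (en n).2) := by
    rw [ch_insert, lam_oneEl hn]
  unfold DD
  rw [h]
  have := @symmDiff_insert_le (oneEl n) (ch (en n).2)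
  unfold wt at this
  rwa [mx_oneEl] at this

end SL16

open scoped NNReal

/- ============ main theorem ============ -/

/-- The semilattice `SL` of functions `ω → {0,1,2}` with finite nonempty support admits a
metrizable shift-continuous topology `τ` in which `{(𝟎_n, 𝟏_n) : n ∈ ω}` is dense in
`SL × SL`; consequently the partial order `P = {(x,y) | x·y = x}` is dense and non-closed
in `SL × SL`. -/
theorem stmt16 :
    ∃ τ : TopologicalSpace SL,
      @TopologicalSpace.MetrizableSpace SL τ ∧
      (∀ a : SL, @Continuous SL SL τ τ (SLmul a)) ∧
      @Dense (SL × SL) (@instTopologicalSpaceProd SL SL τ τ)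
        {p : SL × SL | ∃ n : ℕ, p = (zeroEl n, oneEl n)} ∧
      @Dense (SL × SL) (@instTopologicalSpaceProd SL SL τ τ)
        {p : SL × SL | SLmul p.1 p.2 = p.1} ∧
      ¬ @IsClosed (SL × SL) (@instTopologicalSpaceProd SL SL τ τ)
        {p : SL × SL | SLmul p.1 p.2 = p.1} := by
  letI : MetricSpace SL := SL16.SLms
  have hdistdef : ∀ u v : SL, dist u v = ((SL16.DD u v : ℝ≥0) : ℝ) := fun u v => rfl
  have hd1 : Dense {p : SL × SL | ∃ n : ℕ, p = (zeroEl n, oneEl n)} := by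
    intro p
    rw [mem_closure_iff_nhds]
    intro U hU
    rw [nhds_prod_eq] at hU
    rcases Filter.mem_prod_iff.1 hU with ⟨A, hA, B, hB, hAB⟩
    rcases Metric.mem_nhds_iff.1 hA with ⟨ε₁, hε₁, hb₁⟩
    rcases Metric.mem_nhds_iff.1 hB with ⟨ε₂, hε₂, hb₂⟩
    obtain ⟨N, hN⟩ := exists_pow_lt_of_lt_one (lt_min hε₁ hε₂) (by norm_num : (2⁻¹ : ℝ) < 1)
    obtain ⟨n, hn, hen⟩ := SL16.en_surj p.1 p.2 N
    have hpow : ((2⁻¹ : ℝ) ^ n) < min ε₁ ε₂ :=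
      lt_of_le_of_lt (pow_le_pow_of_le_one (by norm_num) (by norm_num) hn.le) hN
    have h1 : dist (zeroEl n) p.1 < ε₁ := by
      rw [hdistdef]
      have hle : SL16.DD (zeroEl n) p.1 ≤ 2⁻¹ ^ n := by
        have := SL16.DD_zeroEl_le (show 1 ≤ n by omega)
        rwa [show (SL16.en n).1 = p.1 by rw [hen]] at this
      have hle' : ((SL16.DD (zeroEl n) p.1 : ℝ≥0) : ℝ) ≤ (2⁻¹ : ℝ) ^ n := by
        exact_mod_cast hle
      exact lt_of_le_of_lt hle' (lt_of_lt_of_le hpow (min_le_left _ _))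
    have h2 : dist (oneEl n) p.2 < ε₂ := by
      rw [hdistdef]
      have hle : SL16.DD (oneEl n) p.2 ≤ 2⁻¹ ^ n := by
        have := SL16.DD_oneEl_le (show 1 ≤ n by omega)
        rwa [show (SL16.en n).2 = p.2 by rw [hen]] at this
      have hle' : ((SL16.DD (oneEl n) p.2 : ℝ≥0) : ℝ) ≤ (2⁻¹ : ℝ) ^ n := by
        exact_mod_cast hle
      exact lt_of_le_of_lt hle' (lt_of_lt_of_le hpow (min_le_right _ _))
    refine ⟨(zeroEl n, oneEl n), hAB ?_, ⟨n, rfl⟩⟩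
    exact Set.mem_prod.2 ⟨hb₁ (Metric.mem_ball.2 h1), hb₂ (Metric.mem_ball.2 h2)⟩
  have hsub : {p : SL × SL | ∃ n : ℕ, p = (zeroEl n, oneEl n)} ⊆
      {p : SL × SL | SLmul p.1 p.2 = p.1} := by
    rintro p ⟨n, rfl⟩
    show SLmul (zeroEl n) (oneEl n) = zeroEl n
    apply Subtype.ext
    funext i
    show min (if i = n then (0 : Fin 3) else 2) (if i = n then 1 else 2)
      = (if i = n then 0 else 2)
    by_cases h : i = n <;> simp [h]
  have hd2 : Dense {p : SL × SL | SLmul p.1 p.2 = p.1} := hd1.mono hsub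
  refine ⟨UniformSpace.toTopologicalSpace, inferInstance, ?_, hd1, hd2, ?_⟩
  · intro a
    rw [Metric.continuous_iff]
    intro x ε hε
    refine ⟨min ε ((2⁻¹ : ℝ) ^ SL16.mx a), lt_min hε (by positivity), ?_⟩
    intro y hy
    have hdy : SL16.DD y x < 2⁻¹ ^ SL16.mx a := by
      rw [hdistdef] at hy
      have h1 : ((SL16.DD y x : ℝ≥0) : ℝ) < (2⁻¹ : ℝ) ^ SL16.mx a :=
        lt_of_lt_of_le hy (min_le_right _ _)
      exact_mod_cast h1
    have hle := SL16.core' hdy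
    rw [hdistdef] at hy ⊢
    calc ((SL16.DD (SLmul a y) (SLmul a x) : ℝ≥0) : ℝ)
        ≤ ((SL16.DD y x : ℝ≥0) : ℝ) := by exact_mod_cast hle
      _ < ε := lt_of_lt_of_le hy (min_le_left _ _)
  · intro hcl
    have hP : {p : SL × SL | SLmul p.1 p.2 = p.1} = Set.univ := by
      rw [← hcl.closure_eq]
      exact hd2.closure_eq
    have hmem : (oneEl 0, zeroEl 0) ∈ {p : SL × SL | SLmul p.1 p.2 = p.1} := by
      rw [hP]
      trivial
    have heq : SLmul (oneEl 0) (zeroEl 0) = oneEl 0 := hmem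
    have hval := congrFun (congrArg Subtype.val heq) 0
    exact absurd hval (by decide)
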